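/- Let m and n be positive integers and suppose that for every 1 ≤ i ≤ n the number m+i is composite and m+i ∉ H_n. Then the binomial coefficient C(m+n, n) admits a Grimm factorization, i.e., there exist positive integers a_1, ..., a_n with C(m+n, n) = a_1 ⋯ a_n, a_i dividing m+i and a_i > 1 for each i, and gcd(a_i, a_j) = 1 for all i ≠ j. -/

import Mathlib

open Finset Nat
section GrimmAux

lemma carry_of_window_dvd {p k m n j : ℕ} (hp : 0 < p ^ k) (hj1 : 1 ≤ j) (hjn : j ≤ n)
    (hnk : n < p ^ k) (hdvd : p ^ k ∣ m + j) :
    p ^ k ≤ n % p ^ k + m % p ^ k := by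
  have h2 : m % p ^ k < p ^ k := Nat.mod_lt _ hp
  have h3 : n % p ^ k = n := Nat.mod_eq_of_lt hnk
  have hd : p ^ k ∣ m % p ^ k + j := by
    have h1 : (m % p ^ k + j) % p ^ k = 0 := by
      rw [Nat.mod_add_mod, Nat.mod_eq_zero_of_dvd hdvd]
    exact Nat.dvd_of_mod_eq_zero h1
  obtain ⟨c, hc⟩ := hd
  have hc0 : c ≠ 0 := by rintro rfl; simp at hc; omega
  have hc2 : c < 2 := by
    by_contra hge
    have : p ^ k * 2 ≤ p ^ k * c := Nat.mul_le_mul_left _ (by omega)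
    omega
  have : c = 1 := by omega
  subst this
  omega

lemma window_dvd_of_carry {p k m n : ℕ} (hp : 0 < p ^ k)
    (hc : p ^ k ≤ n % p ^ k + m % p ^ k) :
    ∃ j, 1 ≤ j ∧ j ≤ n ∧ p ^ k ∣ m + j := by
  refine ⟨p ^ k - m % p ^ k, ?_, ?_, ?_⟩
  · have := Nat.mod_lt m hp; omega
  · have := Nat.mod_le n (p ^ k); omega
  · have h1 := Nat.div_add_mod m (p ^ k)
    have h2 : m % p ^ k < p ^ k := Nat.mod_lt _ hp
    refine ⟨m / p ^ k + 1, ?_⟩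
    have : p ^ k * (m / p ^ k + 1) = p ^ k * (m / p ^ k) + p ^ k := by ring
    omega

lemma window_unique {q m n i j : ℕ} (hn : n < q) (hi1 : 1 ≤ i) (hin : i ≤ n)
    (hj1 : 1 ≤ j) (hjn : j ≤ n) (h1 : q ∣ m + i) (h2 : q ∣ m + j) : i = j := by
  by_contra hne
  rcases Nat.lt_or_ge i j with hlt | hge
  · have hd : q ∣ (m + j) - (m + i) := Nat.dvd_sub h2 h1
    have h3 : (m + j) - (m + i) = j - i := by omega
    rw [h3] at hd
    have := Nat.le_of_dvd (by omega) hd; omega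
  · have hd : q ∣ (m + i) - (m + j) := Nat.dvd_sub h1 h2
    have h3 : (m + i) - (m + j) = i - j := by omega
    rw [h3] at hd
    have := Nat.le_of_dvd (by omega) hd; omega


lemma choose_factorization_eq {p m n : ℕ} (hp : p.Prime) :
    ((m + n).choose n).factorization p =
      ((Finset.Ico 1 (m + n + 1)).filter fun i => p ^ i ≤ n % p ^ i + m % p ^ i).card := by
  haveI : Fact p.Prime := ⟨hp⟩
  rw [Nat.factorization_def _ hp]
  exact padicValNat_choose' (lt_of_le_of_lt (Nat.log_le_self p (m + n)) (Nat.lt_succ_self _))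



lemma exists_pow_factorization_dvd_window {p m n : ℕ} (hp : p.Prime)
    (hpos : 0 < ((m + n).choose n).factorization p) :
    ∃ j, 1 ≤ j ∧ j ≤ n ∧ p ^ ((m + n).choose n).factorization p ∣ m + j := by
  by_contra hcon
  push_neg at hcon
  set t := ((m + n).choose n).factorization p with ht
  rw [choose_factorization_eq hp] at ht
  have hsub : ((Finset.Ico 1 (m + n + 1)).filter fun i => p ^ i ≤ n % p ^ i + m % p ^ i)
      ⊆ Finset.Ico 1 t := by
    intro k hk
    simp only [Finset.mem_filter, Finset.mem_Ico] at hk ⊢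
    refine ⟨hk.1.1, ?_⟩
    by_contra hge
    push_neg at hge
    obtain ⟨j, hj1, hjn, hjd⟩ := window_dvd_of_carry (pow_pos hp.pos k) hk.2
    exact hcon j hj1 hjn (dvd_trans (pow_dvd_pow p hge) hjd)
  have hcard := Finset.card_le_card hsub
  rw [← ht] at hcard
  simp [Nat.card_Ico] at hcard
  omega

lemma factorization_choose_bounds {p m n i e : ℕ} (hp : p.Prime) (hi1 : 1 ≤ i) (hin : i ≤ n)
    (hne : n < p ^ e) (hdvd : p ^ e ∣ m + i) (hnd : ¬ p ^ (e + 1) ∣ m + i) :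
    1 ≤ ((m + n).choose n).factorization p ∧ ((m + n).choose n).factorization p ≤ e := by
  rw [choose_factorization_eq hp]
  have he1 : 1 ≤ e := by
    by_contra he0
    interval_cases e
    simp at hne; omega
  constructor
  · have hmem : e ∈ (Finset.Ico 1 (m + n + 1)).filter
        fun k => p ^ k ≤ n % p ^ k + m % p ^ k := by
      simp only [Finset.mem_filter, Finset.mem_Ico]
      refine ⟨⟨he1, ?_⟩, carry_of_window_dvd (pow_pos hp.pos e) hi1 hin hne hdvd⟩
      have h1 : e < p ^ e := Nat.lt_pow_self hp.one_lt
      have h2 : p ^ e ≤ m + i := Nat.le_of_dvd (by omega) hdvd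
      omega
    exact Finset.card_pos.mpr ⟨e, hmem⟩ 
  · have hsub : ((Finset.Ico 1 (m + n + 1)).filter fun k => p ^ k ≤ n % p ^ k + m % p ^ k)
        ⊆ Finset.Ico 1 (e + 1) := by
      intro k hk
      simp only [Finset.mem_filter, Finset.mem_Ico] at hk ⊢
      refine ⟨hk.1.1, ?_⟩
      by_contra hge
      push_neg at hge
      obtain ⟨j, hj1, hjn, hjd⟩ := window_dvd_of_carry (pow_pos hp.pos k) hk.2
      have hje : p ^ e ∣ m + j := dvd_trans (pow_dvd_pow p (by omega)) hjd
      have : i = j := window_unique hne hi1 hin hj1 hjn hdvd hje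
      subst this
      exact hnd (dvd_trans (pow_dvd_pow p (by omega)) hjd)
    have := Finset.card_le_card hsub
    simpa [Nat.card_Ico] using this

lemma prod_dvd_of_pairwise_coprime {s : Finset ℕ} {f : ℕ → ℕ} {z : ℕ}
    (hcop : ∀ a ∈ s, ∀ b ∈ s, a ≠ b → Nat.Coprime (f a) (f b))
    (hdvd : ∀ a ∈ s, f a ∣ z) : (∏ a ∈ s, f a) ∣ z := by
  induction s using Finset.induction_on with
  | empty => simpa using one_dvd z
  | @insert x s hx ih =>
    rw [Finset.prod_insert hx]
    refine Nat.Coprime.mul_dvd_of_dvd_of_dvd ?_ (hdvd x (Finset.mem_insert_self x s)) ?_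
    · exact Nat.Coprime.prod_right fun a ha =>
        hcop x (Finset.mem_insert_self x s) a (Finset.mem_insert_of_mem ha)
          (fun hxa => hx (hxa ▸ ha))
    · exact ih (fun a ha b hb hab => hcop a (Finset.mem_insert_of_mem ha)
        b (Finset.mem_insert_of_mem hb) hab)
        (fun a ha => hdvd a (Finset.mem_insert_of_mem ha))

end GrimmAux

/-- `H n` is the set of composite positive integers `x` such that
`p^{v_p(x)} ≤ n` for every prime `p` dividing `x`. -/
def Hset (n : ℕ) : Set ℕ :=
  {x | 1 < x ∧ ¬ x.Prime ∧ ∀ p : ℕ, p.Prime → p ∣ x → p ^ (x.factorization p) ≤ n}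

/-- **Lemma 3.** If for every `1 ≤ i ≤ n` the number `m+i` is composite and
`m+i ∉ H_n`, then `C(m+n, n)` admits a Grimm factorization. -/
theorem grimm_factorization_of_not_mem_Hset
    (m n : ℕ) (hm : 0 < m) (hn : 0 < n)
    (h : ∀ i ∈ Finset.Icc 1 n, (1 < m + i ∧ ¬ (m + i).Prime) ∧ m + i ∉ Hset n) :
    ∃ a : ℕ → ℕ,
      Nat.choose (m + n) n = ∏ i ∈ Finset.Icc 1 n, a i ∧
      (∀ i ∈ Finset.Icc 1 n, a i ∣ (m + i) ∧ 1 < a i) ∧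
      (∀ i ∈ Finset.Icc 1 n, ∀ j ∈ Finset.Icc 1 n, i ≠ j →
        Nat.Coprime (a i) (a j)) := by
  classical
  set N := (m + n).choose n with hN
  have hN0 : N ≠ 0 := (Nat.choose_pos (Nat.le_add_left n m)).ne'
  -- choose the large prime powers
  have hex : ∀ i, ∃ p, i ∈ Finset.Icc 1 n →
      p.Prime ∧ p ∣ (m + i) ∧ n < p ^ ((m + i).factorization p) := by
    intro i
    by_cases hi : i ∈ Finset.Icc 1 n
    · obtain ⟨⟨h1, h2⟩, h3⟩ := h i hi
      have hC : ¬ ∀ p : ℕ, p.Prime → p ∣ (m + i) →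
          p ^ ((m + i).factorization p) ≤ n := fun hC => h3 ⟨h1, h2, hC⟩
      push_neg at hC
      obtain ⟨p, hp, hpd, hple⟩ := hC
      exact ⟨p, fun _ => ⟨hp, hpd, by omega⟩⟩
    · exact ⟨2, fun hi' => absurd hi' hi⟩
  choose P hP using hex
  have hPp : ∀ i ∈ Finset.Icc 1 n, (P i).Prime := fun i hi => (hP i hi).1
  have hPlt : ∀ i ∈ Finset.Icc 1 n, n < (P i) ^ ((m + i).factorization (P i)) :=
    fun i hi => (hP i hi).2.2
  have hPdvd : ∀ i ∈ Finset.Icc 1 n, (P i) ^ ((m + i).factorization (P i)) ∣ m + i :=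
    fun i hi => Nat.ordProj_dvd _ _
  have hPnd : ∀ i ∈ Finset.Icc 1 n,
      ¬ (P i) ^ ((m + i).factorization (P i) + 1) ∣ m + i := fun i hi =>
    Nat.pow_succ_factorization_not_dvd (by omega) (hPp i hi)
  have hbounds : ∀ i ∈ Finset.Icc 1 n,
      1 ≤ N.factorization (P i) ∧
        N.factorization (P i) ≤ (m + i).factorization (P i) := by
    intro i hi
    rw [Finset.mem_Icc] at hi
    exact factorization_choose_bounds (hPp i (Finset.mem_Icc.mpr hi)) hi.1 hi.2
      (hPlt i (Finset.mem_Icc.mpr hi)) (hPdvd i (Finset.mem_Icc.mpr hi))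
      (hPnd i (Finset.mem_Icc.mpr hi))
  -- injectivity of P
  have hPinj : ∀ i ∈ Finset.Icc 1 n, ∀ j ∈ Finset.Icc 1 n, P i = P j → i = j := by
    intro i hi j hj hij
    rw [Finset.mem_Icc] at hi hj
    set ei := (m + i).factorization (P i)
    set ej := (m + j).factorization (P j)
    have h1 : (P i) ^ min ei ej ∣ m + i :=
      dvd_trans (pow_dvd_pow _ (min_le_left _ _)) (hPdvd i (Finset.mem_Icc.mpr hi))
    have h2 : (P i) ^ min ei ej ∣ m + j := by
      rw [hij]
      exact dvd_trans (pow_dvd_pow _ (min_le_right _ _)) (hPdvd j (Finset.mem_Icc.mpr hj))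
    have hlt : n < (P i) ^ min ei ej := by
      rcases min_cases ei ej with ⟨hmin, _⟩ | ⟨hmin, _⟩
      · rw [hmin]; exact hPlt i (Finset.mem_Icc.mpr hi)
      · rw [hmin, hij]; exact hPlt j (Finset.mem_Icc.mpr hj)
    exact window_unique hlt hi.1 hi.2 hj.1 hj.2 h1 h2
  -- window multiples for all prime factors of N
  have hwin : ∀ p ∈ N.primeFactors, ∃ j, 1 ≤ j ∧ j ≤ n ∧
      p ^ N.factorization p ∣ m + j := by
    intro p hp
    have hpp := Nat.prime_of_mem_primeFactors hp
    have hpos : 0 < N.factorization p :=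
      hpp.factorization_pos_of_dvd hN0 (Nat.dvd_of_mem_primeFactors hp)
    exact exists_pow_factorization_dvd_window hpp hpos
  -- assignment of prime factors to indices
  set g : ℕ → ℕ := fun p =>
    if hq : ∃ i, i ∈ Finset.Icc 1 n ∧ P i = p then hq.choose
    else if hr : ∃ j, 1 ≤ j ∧ j ≤ n ∧ p ^ N.factorization p ∣ m + j then hr.choose
    else 1 with hg
  have hg1 : ∀ p ∈ N.primeFactors, g p ∈ Finset.Icc 1 n ∧
      p ^ N.factorization p ∣ m + g p := by
    intro p hp
    rw [hg]
    by_cases hq : ∃ i, i ∈ Finset.Icc 1 n ∧ P i = p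
    · simp only [dif_pos hq]
      obtain ⟨hqi, hqp⟩ := hq.choose_spec
      refine ⟨hqi, ?_⟩
      have heq : p ^ N.factorization p = P hq.choose ^ N.factorization (P hq.choose) := by
        rw [hqp]
      rw [heq]
      exact dvd_trans (pow_dvd_pow _ (hbounds _ hqi).2) (hPdvd _ hqi)
    · have hr : ∃ j, 1 ≤ j ∧ j ≤ n ∧ p ^ N.factorization p ∣ m + j := hwin p hp
      simp only [dif_neg hq, dif_pos hr]
      obtain ⟨h1, h2, h3⟩ := hr.choose_spec
      exact ⟨Finset.mem_Icc.mpr ⟨h1, h2⟩, h3⟩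
  have hg2 : ∀ i ∈ Finset.Icc 1 n, g (P i) = i := by
    intro i hi
    have hq : ∃ i', i' ∈ Finset.Icc 1 n ∧ P i' = P i := ⟨i, hi, rfl⟩
    rw [hg]
    simp only [dif_pos hq]
    obtain ⟨hqi, hqp⟩ := hq.choose_spec
    exact hPinj _ hqi i hi hqp
  have hPN : ∀ i ∈ Finset.Icc 1 n, P i ∈ N.primeFactors := by
    intro i hi
    refine Nat.mem_primeFactors.mpr ⟨hPp i hi, ?_, hN0⟩
    have hb := (hbounds i hi).1
    have := (Nat.Prime.pow_dvd_iff_le_factorization (hPp i hi) hN0).mpr hb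
    simpa using this
  -- the factorization
  refine ⟨fun i => ∏ p ∈ N.primeFactors.filter (fun p => g p = i), p ^ N.factorization p,
    ?_, ?_, ?_⟩
  · rw [Finset.prod_fiberwise_of_maps_to (fun p hp => (hg1 p hp).1)]
    conv_lhs => rw [← Nat.factorization_prod_pow_eq_self hN0]
    rw [Finsupp.prod, Nat.support_factorization]
  · intro i hi
    constructor
    · refine prod_dvd_of_pairwise_coprime ?_ ?_
      · intro p hp q hq hpq
        exact Nat.Coprime.pow _ _ ((Nat.coprime_primes
          (Nat.prime_of_mem_primeFactors (Finset.mem_filter.mp hp).1)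
          (Nat.prime_of_mem_primeFactors (Finset.mem_filter.mp hq).1)).mpr hpq)
      · intro p hp
        obtain ⟨hp1, hp2⟩ := Finset.mem_filter.mp hp
        have := (hg1 p hp1).2
        rwa [hp2] at this
    · show 1 < ∏ p ∈ N.primeFactors.filter (fun p => g p = i), p ^ N.factorization p
      have hmem : P i ∈ N.primeFactors.filter (fun p => g p = i) :=
        Finset.mem_filter.mpr ⟨hPN i hi, hg2 i hi⟩
      have hle : P i ^ N.factorization (P i) ≤
          ∏ p ∈ N.primeFactors.filter (fun p => g p = i), p ^ N.factorization p :=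
        Finset.single_le_prod' (fun p hp =>
          Nat.one_le_iff_ne_zero.mpr (pow_ne_zero _
            (Nat.prime_of_mem_primeFactors (Finset.mem_filter.mp hp).1).pos.ne')) hmem
      have h1 : 1 < P i ^ N.factorization (P i) :=
        Nat.one_lt_pow (by have := (hbounds i hi).1; omega) (hPp i hi).one_lt
      omega
  · intro i hi j hj hij
    refine Nat.Coprime.prod_left fun p hp => Nat.Coprime.prod_right fun q hq => ?_
    have hpi := (Finset.mem_filter.mp hp).2
    have hqj := (Finset.mem_filter.mp hq).2
    refine Nat.Coprime.pow _ _ ((Nat.coprime_primes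
      (Nat.prime_of_mem_primeFactors (Finset.mem_filter.mp hp).1)
      (Nat.prime_of_mem_primeFactors (Finset.mem_filter.mp hq).1)).mpr ?_)
    rintro rfl
    exact hij (hpi ▸ hqj ▸ rfl)
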